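/- Optimality of the flattened upper bound: Let Q be a set of probability vectors, s_k = sup_{q∈Q} (sum of k largest entries of q), and let t be obtained from the increments S_k = s_k − s_{k−1} by the flatness process (averaging an increasing segment S_i,...,S_j to a = (Σ_{m=i}^j S_m)/(j−i+1)). Then any probability vector y in non-increasing order satisfying q ≺ y for all q ∈ Q also satisfies t ≺ y. -/

import Mathlib

open Finset

noncomputable def pMax {n : ℕ} (x : Fin n → ℝ) (k : ℕ) : ℝ :=
  sSup {s : ℝ | ∃ I : Finset (Fin n), I.card = k ∧ s = ∑ i ∈ I, x i}

def Maj {n : ℕ} (x y : Fin n → ℝ) : Prop :=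
  (∀ k ≤ n, pMax x k ≤ pMax y k) ∧ (∑ i, x i = ∑ i, y i)

def ProbVec {n : ℕ} (p : Fin n → ℝ) : Prop :=
  (∀ i, 0 ≤ p i) ∧ ∑ i, p i = 1

/-- truncation of a Fin-vector to a ℕ-indexed sequence -/
noncomputable def Ytr {n : ℕ} (x : Fin n → ℝ) (m : ℕ) : ℝ :=
  if h : m < n then x ⟨m, h⟩ else 0

lemma le_orderEmbOfFin {n k : ℕ} (I : Finset (Fin n)) (hI : I.card = k) (r : Fin k) :
    (r : ℕ) ≤ (I.orderEmbOfFin hI r : ℕ) := by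
  induction' hr : (r : ℕ) with m ih generalizing r
  · exact Nat.zero_le _
  · have hm : m < k := by omega
    have hlt : (I.orderEmbOfFin hI ⟨m, hm⟩ : ℕ) < (I.orderEmbOfFin hI r : ℕ) := by
      have : (⟨m, hm⟩ : Fin k) < r := by simp [Fin.lt_def, hr]
      exact (I.orderEmbOfFin hI).strictMono this
    have := ih ⟨m, hm⟩ rfl
    omega

lemma sum_le_topk {n k : ℕ} (x : Fin n → ℝ) (hx : ∀ b c : Fin n, b ≤ c → x c ≤ x b)
    (hk : k ≤ n) (I : Finset (Fin n)) (hI : I.card = k) :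
    ∑ v ∈ I, x v ≤ ∑ m ∈ Finset.range k, Ytr x m := by
  have h1 : ∑ v ∈ I, x v = ∑ r : Fin k, x (I.orderEmbOfFin hI r) := by
    rw [← Finset.sum_coe_sort I x,
      ← Equiv.sum_comp (I.orderIsoOfFin hI).toEquiv (fun v : I => x (v : Fin n))]
    simp [Finset.coe_orderIsoOfFin_apply]
  have h2 : ∑ m ∈ Finset.range k, Ytr x m = ∑ r : Fin k, Ytr x (r : ℕ) :=
    (Fin.sum_univ_eq_sum_range _ k).symm
  rw [h1, h2]
  apply Finset.sum_le_sum
  intro r _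
  have hrn : (r : ℕ) < n := lt_of_lt_of_le r.isLt hk
  have he : Ytr x (r : ℕ) = x ⟨r, hrn⟩ := dif_pos hrn
  rw [he]
  exact hx ⟨r, hrn⟩ (I.orderEmbOfFin hI r) (by
    simpa [Fin.le_def] using le_orderEmbOfFin I hI r)

lemma topk_mem {n k : ℕ} (x : Fin n → ℝ) (hk : k ≤ n) :
    ∃ I : Finset (Fin n), I.card = k ∧ ∑ v ∈ I, x v = ∑ m ∈ Finset.range k, Ytr x m := by
  refine ⟨(Finset.range k).attachFin (fun m hm => (Finset.mem_range.mp hm).trans_le hk),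
    by rw [Finset.card_attachFin, Finset.card_range], ?_⟩
  refine Finset.sum_bij' (fun v _ => (v : ℕ)) (fun m hm => ⟨m, ?_⟩) ?_ ?_ ?_ ?_ ?_
  · exact (Finset.mem_range.mp hm).trans_le hk
  · intro v hv; simpa [Finset.mem_attachFin] using hv
  · intro m hm; simp [Finset.mem_attachFin]; simpa using hm
  · intros; simp
  · intros; simp
  · intro v hv
    have hvn : (v : ℕ) < n := v.isLt
    simp [Ytr, hvn]

lemma pMax_sorted {n k : ℕ} (x : Fin n → ℝ) (hx : ∀ b c : Fin n, b ≤ c → x c ≤ x b)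
    (hk : k ≤ n) : pMax x k = ∑ m ∈ Finset.range k, Ytr x m := by
  obtain ⟨I₀, hI₀c, hI₀s⟩ := topk_mem x hk
  apply le_antisymm
  · refine csSup_le ⟨∑ v ∈ I₀, x v, ⟨I₀, hI₀c, rfl⟩⟩ ?_
    rintro u ⟨I, hIc, rfl⟩
    exact sum_le_topk x hx hk I hIc
  · rw [← hI₀s]
    apply le_csSup
    · refine ⟨∑ m ∈ Finset.range k, Ytr x m, ?_⟩
      rintro u ⟨I, hIc, rfl⟩
      exact sum_le_topk x hx hk I hIc
    · exact ⟨I₀, hI₀c, rfl⟩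

lemma pMax_univ {n : ℕ} (x : Fin n → ℝ) : pMax x n = ∑ v, x v := by
  have hset : {s : ℝ | ∃ I : Finset (Fin n), I.card = n ∧ s = ∑ i ∈ I, x i} = {∑ v, x v} := by
    ext u
    simp only [Set.mem_setOf_eq, Set.mem_singleton_iff]
    constructor
    · rintro ⟨I, hIc, rfl⟩
      have : I = Finset.univ := Finset.card_eq_iff_eq_univ I |>.mp (by simpa using hIc)
      rw [this]
    · rintro rfl
      exact ⟨Finset.univ, by simp, rfl⟩
  rw [pMax, hset, csSup_singleton]

/-- optimality of the flattened upper bound.  With `Q` a set of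
probability vectors, `s k = sup_{q ∈ Q}` (sum of `k` largest entries of `q`),
increments `S k = s k − s (k-1)`, and `t = (T 1, …, T n)` obtained by one application
of the flatness process (averaging the increasing segment `S i, …, S j` to `a`, which
we assume makes `t` non-increasing), any probability vector `y` in non-increasing
order with `q ≺ y` for all `q ∈ Q` satisfies `t ≺ y`. -/
theorem flattened_upper_bound_optimal {n : ℕ} (Q : Set (Fin n → ℝ)) (hQne : Q.Nonempty)
    (hQ : ∀ q ∈ Q, ProbVec q)
    (s : ℕ → ℝ) (hs0 : s 0 = 0)
    (hsdef : ∀ k ≤ n, s k = sSup {u : ℝ | ∃ q ∈ Q, u = pMax q k})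
    (S : ℕ → ℝ) (hS : ∀ m, S m = s m - s (m - 1))
    (i j : ℕ) (a : ℝ)
    (hj1 : 2 ≤ j) (hj2 : j ≤ n) (hjviol : S (j - 1) < S j)
    (hjmin : ∀ m, 2 ≤ m → m < j → S m ≤ S (m - 1))
    (ha : a = (∑ m ∈ Finset.Icc i j, S m) / ((j - i + 1 : ℕ) : ℝ))
    (hi1 : 1 ≤ i) (hi2 : i ≤ j - 1) (hia : i = 1 ∨ a ≤ S (i - 1))
    (himax : ∀ m, i < m → m ≤ j - 1 → S (m - 1) < a)
    (T : ℕ → ℝ) (hT : ∀ m, T m = if i ≤ m ∧ m ≤ j then a else S m)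
    (hTsorted : ∀ m, 2 ≤ m → m ≤ n → T m ≤ T (m - 1)) :
    ∀ y : Fin n → ℝ, ProbVec y → (∀ b c : Fin n, b ≤ c → y c ≤ y b) →
      (∀ q ∈ Q, Maj q y) → Maj (fun m : Fin n => T ((m : ℕ) + 1)) y := by
  intro y hy hysort hmajall
  have hij : i < j := by omega
  set t : Fin n → ℝ := fun m : Fin n => T ((m : ℕ) + 1) with ht
  -- t is non-increasing
  have tkey : ∀ d b, b + d + 1 ≤ n → T (b + d + 1) ≤ T (b + 1) := by
    intro d
    induction d with
    | zero => intro b _; exact le_refl _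
    | succ d ih =>
      intro b hb
      have h1 : T (b + d + 1 + 1) ≤ T (b + d + 1) := by
        have := hTsorted (b + d + 2) (by omega) (by omega)
        simpa [Nat.add_sub_cancel] using this
      calc T (b + (d + 1) + 1) = T (b + d + 1 + 1) := by ring_nf
        _ ≤ T (b + d + 1) := h1
        _ ≤ T (b + 1) := ih b (by omega)
  have htanti : ∀ b c : Fin n, b ≤ c → t c ≤ t b := by
    intro b c hbc
    have hbc' : (b : ℕ) ≤ (c : ℕ) := hbc
    have hthis := tkey ((c : ℕ) - (b : ℕ)) (b : ℕ) (by omega)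
    have hd : (b : ℕ) + ((c : ℕ) - (b : ℕ)) = (c : ℕ) := by omega
    rw [hd] at hthis
    simpa [ht] using hthis
  set P : ℕ → ℝ := fun k => ∑ m ∈ Finset.range k, Ytr y m with hP
  set U : ℕ → ℝ := fun k => ∑ m ∈ Finset.range k, T (m + 1) with hU
  have hpy : ∀ k, k ≤ n → pMax y k = P k := fun k hk => pMax_sorted y hysort hk
  have hpt : ∀ k, k ≤ n → pMax t k = U k := by
    intro k hk
    rw [pMax_sorted t htanti hk]
    apply Finset.sum_congr rfl
    intro m hm
    have hmn : m < n := (Finset.mem_range.mp hm).trans_le hk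
    simp [Ytr, hmn, ht]
  -- telescoping sums
  have hSs : ∀ m : ℕ, S (m + 1) = s (m + 1) - s m := by
    intro m; rw [hS]; simp
  have telR : ∀ q : ℕ, ∑ m ∈ Finset.range q, (s (m + 1) - s m) = s q := by
    intro q; rw [Finset.sum_range_sub s q, hs0, sub_zero]
  have telIco : ∀ p q : ℕ, p ≤ q →
      ∑ m ∈ Finset.Ico p q, (s (m + 1) - s m) = s q - s p := by
    intro p q hpq
    have h := Finset.sum_range_add_sum_Ico (fun m => s (m + 1) - s m) hpq
    rw [telR p, telR q] at h
    linarith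
  -- partial sums of T
  have hU1 : ∀ k, k < i → U k = s k := by
    intro k hk
    have hcong : ∀ m ∈ Finset.range k, T (m + 1) = s (m + 1) - s m := by
      intro m hm
      have hmk : m < k := Finset.mem_range.mp hm
      rw [hT, if_neg (by omega), hSs]
    simp only [hU]
    rw [Finset.sum_congr rfl hcong, telR]
  have hUj : ∀ k, i - 1 ≤ k → k ≤ j → U k = s (i - 1) + ((k - (i - 1) : ℕ) : ℝ) * a := by
    intro k hk1 hk2
    have hsplit := Finset.sum_range_add_sum_Ico (fun m => T (m + 1)) hk1
    have hconst : ∀ m ∈ Finset.Ico (i - 1) k, T (m + 1) = a := by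
      intro m hm
      rw [Finset.mem_Ico] at hm
      rw [hT, if_pos ⟨by omega, by omega⟩]
    have h2 : ∑ m ∈ Finset.Ico (i - 1) k, T (m + 1) = ((k - (i - 1) : ℕ) : ℝ) * a := by
      rw [Finset.sum_congr rfl hconst, Finset.sum_const, Nat.card_Ico, nsmul_eq_mul]
    have h3 : U (i - 1) = s (i - 1) := hU1 (i - 1) (by omega)
    simp only [hU] at h3 ⊢
    rw [← hsplit, h2, h3]
  have hIccIco : ∑ m ∈ Finset.Icc i j, S m = ∑ m ∈ Finset.Ico (i - 1) j, S (m + 1) := by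
    refine Finset.sum_bij' (fun m _ => m - 1) (fun m _ => m + 1) ?_ ?_ ?_ ?_ ?_
    · intro m hm; simp only [Finset.mem_Icc] at hm; simp only [Finset.mem_Ico]; omega
    · intro m hm; simp only [Finset.mem_Ico] at hm; simp only [Finset.mem_Icc]; omega
    · intro m hm; simp only [Finset.mem_Icc] at hm; omega
    · intro m hm; simp only [Finset.mem_Ico] at hm; omega
    · intro m hm; simp only [Finset.mem_Icc] at hm; congr 1; omega
  have hIcc : ∑ m ∈ Finset.Icc i j, S m = s j - s (i - 1) := by
    rw [hIccIco, Finset.sum_congr rfl (fun m _ => hSs m), telIco (i - 1) j (by omega)]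
  have hden : ((j - i + 1 : ℕ) : ℝ) ≠ 0 := Nat.cast_ne_zero.mpr (by omega)
  have hsum_a : ((j - i + 1 : ℕ) : ℝ) * a = s j - s (i - 1) := by
    rw [ha, mul_comm, div_mul_cancel₀ _ hden, hIcc]
  have hUtop : ∀ k, j ≤ k → U k = s k := by
    intro k hk
    have hsplit := Finset.sum_range_add_sum_Ico (fun m => T (m + 1)) hk
    have hcong : ∀ m ∈ Finset.Ico j k, T (m + 1) = s (m + 1) - s m := by
      intro m hm
      rw [Finset.mem_Ico] at hm
      rw [hT, if_neg (by omega), hSs]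
    have h2 : ∑ m ∈ Finset.Ico j k, T (m + 1) = s k - s j := by
      rw [Finset.sum_congr rfl hcong, telIco j k hk]
    have h3 : U j = s j := by
      have h4 := hUj j (by omega) le_rfl
      have hnat : (j - (i - 1) : ℕ) = j - i + 1 := by omega
      rw [h4, hnat, hsum_a]; ring
    simp only [hU] at h3 ⊢
    rw [← hsplit, h2, h3]; ring
  -- majorization gives s k ≤ P k
  have hsP : ∀ k, k ≤ n → s k ≤ P k := by
    intro k hk
    rw [hsdef k hk]
    obtain ⟨q0, hq0⟩ := hQne
    refine csSup_le ⟨pMax q0 k, ⟨q0, hq0, rfl⟩⟩ ?_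
    rintro u ⟨q, hq, rfl⟩
    calc pMax q k ≤ pMax y k := (hmajall q hq).1 k hk
      _ = P k := hpy k hk
  -- the key inequality
  have hUP : ∀ k, k ≤ n → U k ≤ P k := by
    intro k hk
    rcases lt_or_ge k i with hki | hki
    · rw [hU1 k hki]; exact hsP k hk
    rcases le_or_gt j k with hjk | hjk
    · rw [hUtop k hjk]; exact hsP k hk
    -- middle case : i ≤ k < j
    have hk1 : i - 1 ≤ k := by omega
    have hk2 : k ≤ j := le_of_lt hjk
    rw [hUj k hk1 hk2]
    obtain ⟨d, hd⟩ : ∃ d, k - (i - 1) = d := ⟨_, rfl⟩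
    obtain ⟨L, hL⟩ : ∃ L, j - (i - 1) = L := ⟨_, rfl⟩
    rw [hd]
    have hd1 : 1 ≤ d := by omega
    have hdL : d ≤ L := by omega
    have hLa : (L : ℝ) * a = s j - s (i - 1) := by
      have hLeq : j - i + 1 = L := by omega
      rw [← hLeq]; exact hsum_a
    have hk1n : k - 1 < n := by omega
    set c : ℝ := Ytr y (k - 1) with hc
    have hPk : (d : ℝ) * c ≤ P k - P (i - 1) := by
      have hsplit := Finset.sum_range_add_sum_Ico (Ytr y) hk1
      have hbound : ∀ m ∈ Finset.Ico (i - 1) k, c ≤ Ytr y m := by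
        intro m hm
        rw [Finset.mem_Ico] at hm
        have hmn : m < n := by omega
        have e1 : Ytr y m = y ⟨m, hmn⟩ := dif_pos hmn
        have e2 : c = y ⟨k - 1, hk1n⟩ := by rw [hc]; exact dif_pos hk1n
        rw [e1, e2]
        refine hysort ⟨m, hmn⟩ ⟨k - 1, hk1n⟩ ?_
        simp only [Fin.le_def]; omega
      have hcard := Finset.card_nsmul_le_sum (Finset.Ico (i - 1) k) (Ytr y) c hbound
      rw [Nat.card_Ico, nsmul_eq_mul, hd] at hcard
      simp only [hP] at *
      linarith
    have hPj : P j - P k ≤ ((L : ℝ) - (d : ℝ)) * c := by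
      have hsplit := Finset.sum_range_add_sum_Ico (Ytr y) hk2
      have hbound : ∀ m ∈ Finset.Ico k j, Ytr y m ≤ c := by
        intro m hm
        rw [Finset.mem_Ico] at hm
        have hmn : m < n := by omega
        have e1 : Ytr y m = y ⟨m, hmn⟩ := dif_pos hmn
        have e2 : c = y ⟨k - 1, hk1n⟩ := by rw [hc]; exact dif_pos hk1n
        rw [e1, e2]
        refine hysort ⟨k - 1, hk1n⟩ ⟨m, hmn⟩ ?_
        simp only [Fin.le_def]; omega
      have hcard := Finset.sum_le_card_nsmul (Finset.Ico k j) (Ytr y) c hbound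
      rw [Nat.card_Ico, nsmul_eq_mul] at hcard
      have hcast : ((j - k : ℕ) : ℝ) = (L : ℝ) - (d : ℝ) := by
        have h : (j - k) + d = L := by omega
        have h' := congrArg (fun z : ℕ => (z : ℝ)) h
        push_cast at h'
        linarith
      rw [hcast] at hcard
      simp only [hP] at *
      linarith
    have hs1 : s (i - 1) ≤ P (i - 1) := hsP (i - 1) (by omega)
    have hs2 : s j ≤ P j := hsP j hj2
    have hd0 : (0 : ℝ) ≤ (d : ℝ) := Nat.cast_nonneg d
    have hLd : (d : ℝ) ≤ (L : ℝ) := Nat.cast_le.mpr hdL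
    have hL1 : (1 : ℝ) ≤ (L : ℝ) := by exact_mod_cast Nat.one_le_cast.mpr (by omega)
    have hLpos : (0 : ℝ) < (L : ℝ) := by linarith
    rw [← mul_le_mul_iff_right₀ hLpos]
    have expand : (L : ℝ) * (s (i - 1) + (d : ℝ) * a)
        = ((L : ℝ) - (d : ℝ)) * s (i - 1) + (d : ℝ) * s j := by
      linear_combination (d : ℝ) * hLa
    rw [expand]
    have p1 := mul_le_mul_of_nonneg_left hPj hd0
    have p2 := mul_le_mul_of_nonneg_left hPk (by linarith : (0 : ℝ) ≤ (L : ℝ) - (d : ℝ))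
    have p3 := mul_le_mul_of_nonneg_left hs1 (by linarith : (0 : ℝ) ≤ (L : ℝ) - (d : ℝ))
    have p4 := mul_le_mul_of_nonneg_left hs2 hd0
    nlinarith [p1, p2, p3, p4]
  constructor
  · intro k hk
    rw [hpt k hk, hpy k hk]
    exact hUP k hk
  · have h1 : ∑ v : Fin n, t v = U n := by
      simp only [ht, hU]
      exact Fin.sum_univ_eq_sum_range (fun m => T (m + 1)) n
    have h2 : s n = 1 := by
      rw [hsdef n le_rfl]
      have hset : {u : ℝ | ∃ q ∈ Q, u = pMax q n} = {1} := by
        ext u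
        simp only [Set.mem_setOf_eq, Set.mem_singleton_iff]
        constructor
        · rintro ⟨q, hq, rfl⟩
          rw [pMax_univ q, (hQ q hq).2]
        · rintro rfl
          obtain ⟨q0, hq0⟩ := hQne
          exact ⟨q0, hq0, by rw [pMax_univ q0, (hQ q0 hq0).2]⟩
      rw [hset, csSup_singleton]
    rw [h1, hUtop n hj2, h2, hy.2]
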